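/- For every brick (rectangular box) B = [a₁,b₁]×⋯×[a_d,b_d] in ℝ^d and every interior point c of B, the number of equilibrium points of B with respect to c is exactly 3^d − 1. -/

import Mathlib

open MeasureTheory
open scoped RealInnerProductSpace

/-- `q ∈ ∂K` is an equilibrium point of `K` with respect to `c`: the hyperplane
through `q` perpendicular to the segment `[c,q]` supports `K`. -/
def IsEquilibriumPoint {d : ℕ} (K : Set (EuclideanSpace ℝ (Fin d)))
    (c q : EuclideanSpace ℝ (Fin d)) : Prop :=
  q ∈ frontier K ∧
    ((∀ x ∈ K, ⟪x - q, q - c⟫ ≤ 0) ∨ (∀ x ∈ K, 0 ≤ ⟪x - q, q - c⟫))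

private lemma euc_inner_eq {d : ℕ} (u v : EuclideanSpace ℝ (Fin d)) :
    ⟪u, v⟫ = ∑ i, u i * v i := by
  simp [PiLp.inner_apply]; exact Finset.sum_congr rfl fun _ _ => mul_comm _ _

private lemma euc_sub_apply {d : ℕ} (u v : EuclideanSpace ℝ (Fin d)) (i : Fin d) :
    (u - v) i = u i - v i := by simp

/-- A brick `B = [a₁,b₁] × ⋯ × [a_d,b_d]` has exactly `3^d - 1` equilibrium
points with respect to every interior point. -/
theorem stmt_17 (d : ℕ) (a b : Fin d → ℝ) (hab : ∀ i, a i < b i)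
    (B : Set (EuclideanSpace ℝ (Fin d)))
    (hB : B = {x : EuclideanSpace ℝ (Fin d) | ∀ i, x i ∈ Set.Icc (a i) (b i)})
    (c : EuclideanSpace ℝ (Fin d)) (hc : c ∈ interior B) :
    {q : EuclideanSpace ℝ (Fin d) | IsEquilibriumPoint B c q}.ncard = 3^d - 1 := by
  have hB' : B = (WithLp.ofLp : EuclideanSpace ℝ (Fin d) → Fin d → ℝ) ⁻¹'
      Set.pi Set.univ fun i => Set.Icc (a i) (b i) := by
    rw [hB]; ext x; rw [Set.mem_preimage, Set.mem_univ_pi]; rfl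
  have hBcl : IsClosed B := by
    rw [hB']; exact (isClosed_set_pi fun i _ => isClosed_Icc).preimage (PiLp.continuous_ofLp 2 _)
  have hint : interior B = (WithLp.ofLp : EuclideanSpace ℝ (Fin d) → Fin d → ℝ) ⁻¹'
      Set.pi Set.univ fun i => Set.Ioo (a i) (b i) := by
    rw [hB', ← IsOpenMap.preimage_interior_eq_interior_preimage (f := WithLp.ofLp)
      (PiLp.homeomorph 2 (fun _ : Fin d => ℝ)).isOpenMap (PiLp.continuous_ofLp 2 _),
      interior_pi_set Set.finite_univ]
    simp only [interior_Icc]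
  have hci : ∀ i, c i ∈ Set.Ioo (a i) (b i) := by
    rw [hint] at hc
    exact fun i => hc i (Set.mem_univ i)
  have hcB : c ∈ B := interior_subset hc
  -- characterization of equilibrium points
  have key : ∀ q : EuclideanSpace ℝ (Fin d),
      IsEquilibriumPoint B c q ↔
        ((∀ i, q i = a i ∨ q i = c i ∨ q i = b i) ∧ q ≠ c) := by
    intro q
    constructor
    · rintro ⟨hqf, hsupp⟩
      have hqB : q ∈ B := hBcl.frontier_subset hqf
      have hqni : q ∉ interior B := by
        rw [hBcl.frontier_eq] at hqf; exact hqf.2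
      have hqc : q ≠ c := fun h => hqni (h ▸ hc)
      have hsupp' : ∀ x ∈ B, ⟪x - q, q - c⟫ ≤ 0 := by
        rcases hsupp with h | h
        · exact h
        · exfalso
          have h1 := h c hcB
          have h2 : ⟪c - q, q - c⟫ = -(‖q - c‖ ^ 2) := by
            rw [show c - q = -(q - c) by abel, inner_neg_left,
              real_inner_self_eq_norm_sq]
          rw [h2] at h1
          have : ‖q - c‖ ^ 2 = 0 := le_antisymm (by linarith) (by positivity)
          exact hqc (by rwa [pow_eq_zero_iff (by norm_num), norm_sub_eq_zero_iff] at this)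
      refine ⟨fun i => ?_, hqc⟩
      have hqBi : q i ∈ Set.Icc (a i) (b i) := by rw [hB] at hqB; exact hqB i
      have hinner : ∀ t : ℝ, t ∈ Set.Icc (a i) (b i) →
          (t - q i) * (q i - c i) ≤ 0 := by
        intro t ht
        set x : EuclideanSpace ℝ (Fin d) := WithLp.toLp 2 (Function.update (WithLp.ofLp q) i t) with hxdef
        have hxval : ∀ j, x j = if j = i then t else q j := by
          intro j
          rw [hxdef, PiLp.toLp_apply, Function.update_apply]
        have hxB : x ∈ B := by
          rw [hB]; intro j
          rw [hxval j]
          by_cases hj : j = i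
          · simpa [hj] using ht
          · simp only [if_neg hj]
            rw [hB] at hqB; exact hqB j
        have h1 := hsupp' x hxB
        rw [euc_inner_eq] at h1
        have h2 : ∀ j, (x - q) j
            * ((q - c) j) = if j = i then (t - q i) * (q i - c i) else 0 := by
          intro j
          rw [euc_sub_apply, euc_sub_apply, hxval j]
          by_cases hj : j = i
          · subst hj; simp
          · simp [hj]
        rw [Finset.sum_congr rfl fun j _ => h2 j] at h1
        simpa using h1
      rcases lt_trichotomy (q i) (c i) with h | h | h
      · left
        have := hinner (a i) ⟨le_refl _, (hab i).le⟩
        nlinarith [hqBi.1]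
      · right; left; exact h
      · right; right
        have := hinner (b i) ⟨(hab i).le, le_refl _⟩
        nlinarith [hqBi.2]
    · rintro ⟨hmem, hne⟩
      have hqB : q ∈ B := by
        rw [hB]; intro i
        rcases hmem i with h | h | h
        · rw [h]; exact ⟨le_refl _, (hab i).le⟩
        · rw [h]; exact ⟨(hci i).1.le, (hci i).2.le⟩
        · rw [h]; exact ⟨(hab i).le, le_refl _⟩
      have hqni : q ∉ interior B := by
        rw [hint]
        obtain ⟨i, hi⟩ : ∃ i, q i ≠ c i := by
          by_contra h
          push_neg at h
          exact hne (congrArg (WithLp.toLp 2) (funext h))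
        intro hmem'
        have h3 := hmem' i (Set.mem_univ i)
        rcases hmem i with h | h | h
        · exact absurd h3.1 (by rw [h]; exact lt_irrefl _)
        · exact hi h
        · exact absurd h3.2 (by rw [h]; exact lt_irrefl _)
      refine ⟨by rw [hBcl.frontier_eq]; exact ⟨hqB, hqni⟩, Or.inl fun x hx => ?_⟩
      rw [euc_inner_eq]
      apply Finset.sum_nonpos
      intro j _
      rw [euc_sub_apply, euc_sub_apply]
      rw [hB] at hx
      rcases hmem j with h | h | h
      · rw [h]; nlinarith [(hx j).1, (hci j).1]
      · rw [h]; ring_nf; simp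
      · rw [h]; nlinarith [(hx j).2, (hci j).2]
  -- counting
  set F : Finset (EuclideanSpace ℝ (Fin d)) :=
    (Fintype.piFinset fun i => ({a i, c i, b i} : Finset ℝ)).map
      (WithLp.equiv 2 (Fin d → ℝ)).symm.toEmbedding with hF
  have hmemF : ∀ q : EuclideanSpace ℝ (Fin d),
      q ∈ F ↔ ∀ i, q i = a i ∨ q i = c i ∨ q i = b i := by
    intro q
    rw [hF, Finset.mem_map_equiv, Fintype.mem_piFinset]
    simp [Finset.mem_insert, Finset.mem_singleton]
  have hset : {q : EuclideanSpace ℝ (Fin d) | IsEquilibriumPoint B c q}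
      = (↑F : Set (EuclideanSpace ℝ (Fin d))) \ {c} := by
    ext q
    simp only [Set.mem_setOf_eq, key q, Set.mem_diff, Finset.coe_sort_coe,
      Finset.mem_coe, Set.mem_singleton_iff, hmemF q]
  have hcF : c ∈ (↑F : Set (EuclideanSpace ℝ (Fin d))) := by
    rw [Finset.mem_coe, hmemF]; exact fun i => Or.inr (Or.inl rfl)
  have hcard : F.card = 3 ^ d := by
    rw [hF, Finset.card_map, Fintype.card_piFinset]
    have h3 : ∀ i, ({a i, c i, b i} : Finset ℝ).card = 3 := by
      intro i
      have h1 := (hci i).1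
      have h2 := (hci i).2
      rw [Finset.card_insert_of_notMem (by simp [h1.ne, (h1.trans h2).ne]),
        Finset.card_insert_of_notMem (by simp [h2.ne])]
      simp
    simp [h3]
  rw [hset, Set.ncard_diff_singleton_of_mem hcF,
    Set.ncard_coe_finset, hcard]
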